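/- For any β > 0, the SGT2 ODE model is globally attractive at (Q*, Q*): every differentiable curve t ↦ (Qᴬ_t, Qᴮ_t) : [0,∞) → ℝ^{S×A} × ℝ^{S×A} satisfying, for all t ≥ 0 and all (s,a) ∈ S×A, d/dt Qᴬ_t(s,a) = d(s,a)·(Σ_{s'} P(s'|s,a)·(r(s,a,s') + γ·max_{a'} Qᴮ_t(s',a')) − Qᴬ_t(s,a) + β·(Qᴮ_t(s,a) − Qᴬ_t(s,a))) and d/dt Qᴮ_t(s,a) = d(s,a)·(Σ_{s'} P(s'|s,a)·(r(s,a,s') + γ·max_{a'} Qᴬ_t(s',a')) − Qᴮ_t(s,a) + β·(Qᴬ_t(s,a) − Qᴮ_t(s,a))) converges as t → ∞ to Qᴬ_t → Q* and Qᴮ_t → Q* (componentwise). -/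

import Mathlib

open Finset

/-- Maximum of `Q s' a'` over actions `a'`. -/
noncomputable def maxQ {S A : Type*} [Fintype A] [Nonempty A]
    (Q : S → A → ℝ) (s' : S) : ℝ :=
  univ.sup' univ_nonempty (fun a' => Q s' a')

/-- The Bellman optimality operator. -/
noncomputable def bellmanT {S A : Type*} [Fintype S] [Fintype A] [Nonempty A]
    (P r : S → A → S → ℝ) (γ : ℝ) (Q : S → A → ℝ) : S → A → ℝ :=
  fun s a => ∑ s', P s a s' * (r s a s' + γ * maxQ Q s')

/-- Sup norm on `ℝ^{S×A}`. -/
noncomputable def supNorm {S A : Type*} [Fintype S] [Fintype A] [Nonempty S] [Nonempty A]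
    (Q : S → A → ℝ) : ℝ :=
  univ.sup' univ_nonempty (fun p : S × A => |Q p.1 p.2|)

open Filter Set Topology

/-- If `f` is differentiable at `τ > 0` and `f t ≤ f τ` for `0 ≤ t < τ`, then `f' τ ≥ 0`. -/
lemma deriv_nonneg_of_left_le {f : ℝ → ℝ} {D τ : ℝ} (hτ : 0 < τ)
    (hf : HasDerivAt f D τ) (hle : ∀ t, 0 ≤ t → t < τ → f t ≤ f τ) : 0 ≤ D := by
  have hs : Tendsto (slope f τ) (𝓝[<] τ) (𝓝 D) :=
    (hasDerivAt_iff_tendsto_slope.1 hf).mono_left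
      (nhdsWithin_mono _ (fun t ht => ne_of_lt ht))
  refine ge_of_tendsto hs ?_
  filter_upwards [eventually_nhdsWithin_of_eventually_nhds (eventually_gt_nhds hτ),
    self_mem_nhdsWithin] with t h0 hlt
  rw [slope_def_field]
  exact div_nonneg_of_nonpos (by linarith [hle t h0.le hlt]) (by simp at hlt; linarith)

/-- The Bellman operator is a `γ`-contraction in sup norm (componentwise form). -/
lemma bellman_contract {S A : Type*} [Fintype S] [Fintype A] [Nonempty A]
    (P r : S → A → S → ℝ) (γ : ℝ) (hγ0 : 0 ≤ γ)
    (hP0 : ∀ s a s', 0 ≤ P s a s') (hP1 : ∀ s a, ∑ s', P s a s' = 1)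
    (Q1 Q2 : S → A → ℝ) (C : ℝ) (h : ∀ s a, |Q1 s a - Q2 s a| ≤ C) (s : S) (a : A) :
    |bellmanT P r γ Q1 s a - bellmanT P r γ Q2 s a| ≤ γ * C := by
  have hmax : ∀ s', |maxQ Q1 s' - maxQ Q2 s'| ≤ C := by
    intro s'
    rw [abs_sub_le_iff]
    constructor
    · rw [sub_le_iff_le_add]
      refine Finset.sup'_le _ _ fun a' _ => ?_
      have h1 := (abs_le.1 (h s' a')).2
      have h2 : Q2 s' a' ≤ maxQ Q2 s' := Finset.le_sup' (fun a' => Q2 s' a') (Finset.mem_univ a')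
      linarith
    · rw [sub_le_iff_le_add]
      refine Finset.sup'_le _ _ fun a' _ => ?_
      have h1 := (abs_le.1 (h s' a')).1
      have h2 : Q1 s' a' ≤ maxQ Q1 s' := Finset.le_sup' (fun a' => Q1 s' a') (Finset.mem_univ a')
      linarith
  have hrw : bellmanT P r γ Q1 s a - bellmanT P r γ Q2 s a
      = ∑ s', P s a s' * (γ * (maxQ Q1 s' - maxQ Q2 s')) := by
    rw [bellmanT, bellmanT, ← Finset.sum_sub_distrib]
    exact Finset.sum_congr rfl fun s' _ => by ring
  rw [hrw]
  calc |∑ s', P s a s' * (γ * (maxQ Q1 s' - maxQ Q2 s'))|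
      ≤ ∑ s', |P s a s' * (γ * (maxQ Q1 s' - maxQ Q2 s'))| :=
        Finset.abs_sum_le_sum_abs _ _
    _ ≤ ∑ s', P s a s' * (γ * C) := by
        refine Finset.sum_le_sum fun s' _ => ?_
        rw [abs_mul, abs_mul, abs_of_nonneg (hP0 s a s'), abs_of_nonneg hγ0]
        exact mul_le_mul_of_nonneg_left
          (mul_le_mul_of_nonneg_left (hmax s') hγ0) (hP0 s a s')
    _ = γ * C := by rw [← Finset.sum_mul, hP1, one_mul]

theorem sgt2_ode_globally_attractive
    {S A : Type*} [Fintype S] [Fintype A] [Nonempty S] [Nonempty A]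
    (P r : S → A → S → ℝ) (γ : ℝ) (hγ0 : 0 ≤ γ) (hγ1 : γ < 1)
    (hP0 : ∀ s a s', 0 ≤ P s a s') (hP1 : ∀ s a, ∑ s', P s a s' = 1)
    (Qstar : S → A → ℝ) (hQstar : bellmanT P r γ Qstar = Qstar)
    (β : ℝ) (hβ : 0 < β)
    (d : S → A → ℝ) (hd : ∀ s a, 0 < d s a)
    (QA QB : ℝ → S → A → ℝ)
    (hQA : ∀ (s : S) (a : A), ∀ t : ℝ, 0 ≤ t → HasDerivAt (fun u => QA u s a)
      (d s a * ((∑ s', P s a s' * (r s a s' + γ * maxQ (QB t) s')) - QA t s a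
        + β * (QB t s a - QA t s a))) t)
    (hQB : ∀ (s : S) (a : A), ∀ t : ℝ, 0 ≤ t → HasDerivAt (fun u => QB u s a)
      (d s a * ((∑ s', P s a s' * (r s a s' + γ * maxQ (QA t) s')) - QB t s a
        + β * (QA t s a - QB t s a))) t) :
    ∀ s a, Tendsto (fun t => QA t s a) atTop (nhds (Qstar s a)) ∧
      Tendsto (fun t => QB t s a) atTop (nhds (Qstar s a)) := by
  -- basic constants
  have hsup_le : ∀ (Q : S → A → ℝ) (s : S) (a : A), |Q s a| ≤ supNorm Q := by
    intro Q s a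
    exact Finset.le_sup' (fun p : S × A => |Q p.1 p.2|) (Finset.mem_univ (s, a))
  set dmin : ℝ := (Finset.univ : Finset (S × A)).inf' Finset.univ_nonempty
    (fun p => d p.1 p.2) with hdmin_def
  have hdmin : 0 < dmin := (Finset.lt_inf'_iff _).2 fun p _ => hd p.1 p.2
  have hdmin_le : ∀ s a, dmin ≤ d s a := fun s a =>
    Finset.inf'_le _ (Finset.mem_univ (s, a))
  set lam : ℝ := dmin * (1 - γ) / 2 with hlam_def
  have hlam0 : 0 < lam := by
    have : 0 < 1 - γ := by linarith
    positivity
  have hlam_lt : ∀ s a, lam < d s a * (1 - γ) := by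
    intro s a
    have h1 := hdmin_le s a
    have h2 : 0 < 1 - γ := by linarith
    nlinarith
  set B : ℝ := max (supNorm (fun s a => QA 0 s a - Qstar s a))
    (supNorm (fun s a => QB 0 s a - Qstar s a)) + 1 with hB_def
  have hB0 : 0 < B := by
    have h1 : (0:ℝ) ≤ supNorm (fun s a => QA 0 s a - Qstar s a) := by
      obtain ⟨s⟩ := ‹Nonempty S›; obtain ⟨a⟩ := ‹Nonempty A›
      exact le_trans (abs_nonneg _) (hsup_le _ s a)
    have := le_max_left (supNorm (fun s a => QA 0 s a - Qstar s a))
      (supNorm (fun s a => QB 0 s a - Qstar s a))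
    linarith
  set y : ℝ → ℝ := fun t => B * Real.exp (-lam * t) with hy_def
  have hy0 : ∀ t, 0 < y t := fun t => mul_pos hB0 (Real.exp_pos _)
  have hyd : ∀ t, HasDerivAt y (-lam * y t) t := by
    intro t
    have h1 : HasDerivAt (fun u : ℝ => -lam * u) (-lam) t := by
      simpa using (hasDerivAt_id t).const_mul (-lam)
    have h3 := (h1.exp).const_mul B
    refine h3.congr_deriv ?_
    change _ = -lam * (B * Real.exp (-lam * t))
    ring
  have hyc : Continuous y := by fun_prop
  -- the "bad" set
  set Z : Set ℝ := {t | 0 ≤ t ∧ ∃ p : S × A,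
      y t ≤ |QA t p.1 p.2 - Qstar p.1 p.2| ∨ y t ≤ |QB t p.1 p.2 - Qstar p.1 p.2|} with hZ_def
  have hcontA : ∀ (s : S) (a : A), ContinuousOn (fun t => QA t s a) (Ici 0) :=
    fun s a t ht => ((hQA s a t ht).continuousAt).continuousWithinAt
  have hcontB : ∀ (s : S) (a : A), ContinuousOn (fun t => QB t s a) (Ici 0) :=
    fun s a t ht => ((hQB s a t ht).continuousAt).continuousWithinAt
  have hZempty : Z = ∅ := by
    by_contra hne'
    rw [← Ne, ← Set.nonempty_iff_ne_empty] at hne'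
    have hclosed : IsClosed Z := by
      have hrw : Z = ⋃ p : S × A,
          ((Ici 0 ∩ (fun t => |QA t p.1 p.2 - Qstar p.1 p.2| - y t) ⁻¹' Ici 0)
            ∪ (Ici 0 ∩ (fun t => |QB t p.1 p.2 - Qstar p.1 p.2| - y t) ⁻¹' Ici 0)) := by
        ext t
        simp only [hZ_def, Set.mem_setOf_eq, Set.mem_iUnion, Set.mem_union, Set.mem_inter_iff,
          Set.mem_preimage, Set.mem_Ici, sub_nonneg]
        constructor
        · rintro ⟨ht, p, hp⟩; exact ⟨p, hp.imp (fun h => ⟨ht, h⟩) (fun h => ⟨ht, h⟩)⟩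
        · rintro ⟨p, hp | hp⟩ <;> exact ⟨hp.1, p, by tauto⟩
      rw [hrw]
      refine isClosed_iUnion_of_finite fun p => IsClosed.union ?_ ?_
      · exact ContinuousOn.preimage_isClosed_of_isClosed
          (((hcontA p.1 p.2).sub continuousOn_const).abs.sub hyc.continuousOn)
          isClosed_Ici isClosed_Ici
      · exact ContinuousOn.preimage_isClosed_of_isClosed
          (((hcontB p.1 p.2).sub continuousOn_const).abs.sub hyc.continuousOn)
          isClosed_Ici isClosed_Ici
    have hbdd : BddBelow Z := ⟨0, fun t ht => ht.1⟩
    set τ := sInf Z with hτ_def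
    have hτZ : τ ∈ Z := hclosed.csInf_mem hne' hbdd
    have hτ0 : 0 ≤ τ := hτZ.1
    have h0notZ : (0:ℝ) ∉ Z := by
      rintro ⟨-, p, hp⟩
      have hy00 : y 0 = B := by simp [hy_def]
      have h1 := hsup_le (fun s a => QA 0 s a - Qstar s a) p.1 p.2
      have h2 := hsup_le (fun s a => QB 0 s a - Qstar s a) p.1 p.2
      have h3 := le_max_left (supNorm (fun s a => QA 0 s a - Qstar s a))
        (supNorm (fun s a => QB 0 s a - Qstar s a))
      have h4 := le_max_right (supNorm (fun s a => QA 0 s a - Qstar s a))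
        (supNorm (fun s a => QB 0 s a - Qstar s a))
      rcases hp with hp | hp <;> rw [hy00] at hp <;> [linarith; linarith]
    have hτpos : 0 < τ := lt_of_le_of_ne hτ0 (fun h => h0notZ (h ▸ hτZ))
    -- strict bounds before τ
    have hstrict : ∀ t, 0 ≤ t → t < τ → ∀ (s : S) (a : A),
        |QA t s a - Qstar s a| < y t ∧ |QB t s a - Qstar s a| < y t := by
      intro t ht htτ s a
      have hnot : t ∉ Z := fun h => absurd (csInf_le hbdd h) (not_le.2 htτ)
      simp only [hZ_def, Set.mem_setOf_eq, not_and, not_exists, not_or, not_le] at hnot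
      exact hnot ht (s, a)
    -- bounds at τ by continuity from the left
    have hlim : ∀ f : ℝ → ℝ, ContinuousOn f (Ici 0) →
        (∀ t, 0 ≤ t → t < τ → |f t| < y t) → |f τ| ≤ y τ := by
      intro f hf hb
      haveI hne2 : (𝓝[Ioo (0:ℝ) τ] τ).NeBot := by
        rw [nhdsWithin_Ioo_eq_nhdsLT hτpos]
        infer_instance
      have hcw : ContinuousWithinAt (fun t => |f t| - y t) (Ioo 0 τ) τ := by
        refine ContinuousWithinAt.mono ?_ (fun x hx => le_of_lt hx.1)
        exact ((hf τ hτ0).abs.sub hyc.continuousWithinAt)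
      have hle0 : ∀ᶠ t in 𝓝[Ioo (0:ℝ) τ] τ, |f t| - y t ≤ 0 := by
        filter_upwards [self_mem_nhdsWithin] with t ht
        linarith [hb t ht.1.le ht.2]
      have h2 := le_of_tendsto hcw hle0
      simp only at h2
      linarith
    have hleτ : ∀ (s : S) (a : A),
        |QA τ s a - Qstar s a| ≤ y τ ∧ |QB τ s a - Qstar s a| ≤ y τ := by
      intro s a
      exact ⟨hlim (fun t => QA t s a - Qstar s a) ((hcontA s a).sub continuousOn_const)
          (fun t ht htτ => (hstrict t ht htτ s a).1),
        hlim (fun t => QB t s a - Qstar s a) ((hcontB s a).sub continuousOn_const)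
          (fun t ht htτ => (hstrict t ht htτ s a).2)⟩
    -- symmetric crossing-case analysis
    have symcase : ∀ (F G : ℝ → S → A → ℝ),
        (∀ (s : S) (a : A), ∀ t : ℝ, 0 ≤ t → HasDerivAt (fun u => F u s a)
          (d s a * ((∑ s', P s a s' * (r s a s' + γ * maxQ (G t) s')) - F t s a
            + β * (G t s a - F t s a))) t) →
        (∀ s a, |F τ s a - Qstar s a| ≤ y τ) →
        (∀ s a, |G τ s a - Qstar s a| ≤ y τ) →
        (∀ t, 0 ≤ t → t < τ → ∀ s a, |F t s a - Qstar s a| < y t) →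
        ∀ s a, ¬ (y τ ≤ |F τ s a - Qstar s a|) := by
      intro F G hF hFle hGle hFlt s a hcon
      have heq : |F τ s a - Qstar s a| = y τ := le_antisymm (hFle s a) hcon
      have hT : |bellmanT P r γ (G τ) s a - Qstar s a| ≤ γ * y τ := by
        have h := bellman_contract P r γ hγ0 hP0 hP1 (G τ) Qstar (y τ)
          (fun s a => hGle s a) s a
        rwa [hQstar] at h
      have hT' := abs_le.1 hT
      have hG' := abs_le.1 (hGle s a)
      have hSum : (∑ s', P s a s' * (r s a s' + γ * maxQ (G τ) s'))
          = bellmanT P r γ (G τ) s a := rfl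
      set T := bellmanT P r γ (G τ) s a with hT_def
      rcases (abs_eq (hy0 τ).le).1 heq with he | he
      · -- upper crossing
        have hfd : HasDerivAt (fun t => F t s a - Qstar s a - y t)
            (d s a * ((∑ s', P s a s' * (r s a s' + γ * maxQ (G τ) s')) - F τ s a
              + β * (G τ s a - F τ s a)) - (-lam * y τ)) τ :=
          ((hF s a τ hτ0).sub_const _).sub (hyd τ)
        have h0D := deriv_nonneg_of_left_le hτpos hfd (by
          intro t ht htτ
          have h1 := hFlt t ht htτ s a
          have h2 : F t s a - Qstar s a ≤ |F t s a - Qstar s a| := le_abs_self _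
          linarith)
        rw [hSum] at h0D
        have hstep1 : G τ s a - F τ s a ≤ 0 := by linarith [hG'.2]
        have hstep2 : β * (G τ s a - F τ s a) ≤ 0 :=
          mul_nonpos_of_nonneg_of_nonpos hβ.le hstep1
        have hstep4 : T - F τ s a + β * (G τ s a - F τ s a) ≤ (γ - 1) * y τ := by
          have := hT'.2; linarith [he]
        have hstep5 : d s a * (T - F τ s a + β * (G τ s a - F τ s a))
            ≤ d s a * ((γ - 1) * y τ) :=
          mul_le_mul_of_nonneg_left hstep4 (hd s a).le
        have hstep6 : d s a * ((γ - 1) * y τ) + lam * y τ < 0 := by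
          nlinarith [mul_lt_mul_of_pos_right (hlam_lt s a) (hy0 τ)]
        linarith
      · -- lower crossing
        have hfd : HasDerivAt (fun t => Qstar s a - F t s a - y t)
            (-(d s a * ((∑ s', P s a s' * (r s a s' + γ * maxQ (G τ) s')) - F τ s a
              + β * (G τ s a - F τ s a))) - (-lam * y τ)) τ :=
          ((hF s a τ hτ0).const_sub _).sub (hyd τ)
        have h0D := deriv_nonneg_of_left_le hτpos hfd (by
          intro t ht htτ
          have h1 := hFlt t ht htτ s a
          have h2 : -(F t s a - Qstar s a) ≤ |F t s a - Qstar s a| := neg_le_abs _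
          linarith)
        rw [hSum] at h0D
        have hstep1 : 0 ≤ G τ s a - F τ s a := by linarith [hG'.1]
        have hstep2 : 0 ≤ β * (G τ s a - F τ s a) := mul_nonneg hβ.le hstep1
        have hstep4 : (1 - γ) * y τ ≤ T - F τ s a + β * (G τ s a - F τ s a) := by
          have := hT'.1; linarith [he]
        have hstep5 : d s a * ((1 - γ) * y τ)
            ≤ d s a * (T - F τ s a + β * (G τ s a - F τ s a)) :=
          mul_le_mul_of_nonneg_left hstep4 (hd s a).le
        have hstep6 : lam * y τ < d s a * ((1 - γ) * y τ) := by
          nlinarith [mul_lt_mul_of_pos_right (hlam_lt s a) (hy0 τ)]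
        linarith
    obtain ⟨-, p, hcase⟩ := hτZ
    rcases hcase with hcase | hcase
    · exact symcase QA QB hQA (fun s a => (hleτ s a).1) (fun s a => (hleτ s a).2)
        (fun t ht htτ s a => (hstrict t ht htτ s a).1) p.1 p.2 hcase
    · exact symcase QB QA hQB (fun s a => (hleτ s a).2) (fun s a => (hleτ s a).1)
        (fun t ht htτ s a => (hstrict t ht htτ s a).2) p.1 p.2 hcase
  -- from emptiness of Z, get the exponential bound
  have key : ∀ t, 0 ≤ t → ∀ (s : S) (a : A),
      |QA t s a - Qstar s a| < y t ∧ |QB t s a - Qstar s a| < y t := by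
    intro t ht s a
    have hnot : t ∉ Z := by rw [hZempty]; exact Set.notMem_empty t
    simp only [hZ_def, Set.mem_setOf_eq, not_and, not_exists, not_or, not_le] at hnot
    exact hnot ht (s, a)
  -- y tends to 0
  have hy_tendsto : Tendsto y atTop (nhds 0) := by
    have h2 : Tendsto (fun t : ℝ => -(lam * t)) atTop atBot :=
      tendsto_neg_atTop_atBot.comp (tendsto_id.const_mul_atTop hlam0)
    have h3 : Tendsto (fun t : ℝ => Real.exp (-(lam * t))) atTop (nhds 0) :=
      Real.tendsto_exp_atBot.comp h2
    have h4 := h3.const_mul B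
    simpa [hy_def, neg_mul] using h4
  intro s a
  have hsq : ∀ (Q : ℝ → S → A → ℝ),
      (∀ t, 0 ≤ t → |Q t s a - Qstar s a| < y t) →
      Tendsto (fun t => Q t s a) atTop (nhds (Qstar s a)) := by
    intro Q hQ
    have h0 : Tendsto (fun t => Q t s a - Qstar s a) atTop (nhds 0) := by
      apply squeeze_zero_norm' _ hy_tendsto
      filter_upwards [eventually_ge_atTop (0:ℝ)] with t ht
      simpa [Real.norm_eq_abs] using (hQ t ht).le
    have := h0.add_const (Qstar s a)
    simpa using this
  exact ⟨hsq QA (fun t ht => (key t ht s a).1), hsq QB (fun t ht => (key t ht s a).2)⟩
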